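/- Let m ≥ 1, n ≥ 1, and for a tuple a = (a_1,…,a_n) ∈ (Fin m)^n set Ξ_F(a) = (δ_{a_n,0} / m^{(n−1)/2}) · exp(2πi·(a_1·a_2 + ⋯ + a_{n−1}·a_n)/m). For θ : Fin n × Fin m → ℝ and x ∈ ℤ^d (with m = 2d) define P_F(θ, x) = Σ_{b∈Fin m} | Σ_{a∈(Fin m)^n, e(a_1)+⋯+e(a_n) = x, a_1 = b} exp(i·Σ_j θ(j, a_j)) · Ξ_F(a) |². Then for every x ∈ ℤ^d, (1/(2π)^{nm}) · ∫_{[0,2π]^{Fin n × Fin m}} P_F(θ, x) dθ = (1/m^{n−1}) · #{ a ∈ (Fin m)^n : e(a_1)+⋯+e(a_n) = x and a_n = 0 }. -/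

import Mathlib

noncomputable section

open scoped BigOperators
open MeasureTheory Real

/-- `Ξ_F(a_1, …, a_n) = (δ_{a_n, 0} / m^{(n-1)/2}) e^{2πi (a_1 a_2 + ⋯ + a_{n-1} a_n)/m}`,
where indices are identified with the integers `0, …, m-1` (the paper's label `|D|`
corresponds to `0`). -/
def XiF (m n : ℕ) (a : Fin n → Fin m) : ℂ :=
  if hn : 0 < n then
    (if (a ⟨n - 1, by omega⟩ : ℕ) = 0 then 1 else 0) / ((Real.sqrt m : ℂ)) ^ (n - 1) *
      Complex.exp (2 * (π : ℂ) * Complex.I *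
        (∑ j : Fin n, if h : (j : ℕ) + 1 < n then
          (((a j : ℕ) : ℂ) * ((a ⟨(j : ℕ) + 1, h⟩ : ℕ) : ℂ)) else 0) / m)
  else 1

/-- The `2d` signed standard basis vectors of `ℤ^d`: `e(2k) = u_k`, `e(2k+1) = -u_k`. -/
def eZ (d : ℕ) (a : Fin (2 * d)) : Fin d → ℤ :=
  Pi.single ⟨(a : ℕ) / 2, by have := a.2; omega⟩ (if (a : ℕ) % 2 = 0 then 1 else -1)

/-- The cube `[0, 2π]^{Fin n × Fin m}` of phase records. -/
def phaseCube (n m : ℕ) : Set (Fin n × Fin m → ℝ) :=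
  Set.pi Set.univ (fun _ => Set.Icc 0 (2 * π))

lemma cube_meas (n m : ℕ) : MeasurableSet (phaseCube n m) :=
  MeasurableSet.univ_pi fun _ => measurableSet_Icc

lemma cube_compact (n m : ℕ) : IsCompact (phaseCube n m) :=
  isCompact_univ_pi fun _ => isCompact_Icc

lemma integral_Icc_exp_int (c : ℤ) :
    ∫ t in Set.Icc (0:ℝ) (2*π), Complex.exp (Complex.I * c * t) =
      if c = 0 then ((2*π : ℝ) : ℂ) else 0 := by
  rw [MeasureTheory.integral_Icc_eq_integral_Ioc,
    ← intervalIntegral.integral_of_le (by positivity : (0:ℝ) ≤ 2*π)]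
  by_cases hc : c = 0
  · simp [hc]
  · have h1 : (Complex.I * (c:ℂ)) ≠ 0 := by
      simp [Complex.ext_iff, hc]
    rw [integral_exp_mul_complex h1]
    have h2 : Complex.exp (Complex.I * c * ((2*π:ℝ):ℂ)) = 1 := by
      have := Complex.exp_int_mul_two_pi_mul_I c
      rw [← this]; push_cast; ring_nf
    rw [h2]
    simp [hc]

lemma integral_cube_prod {n m : ℕ} (g : Fin n × Fin m → ℝ → ℂ) :
    ∫ θ in phaseCube n m, ∏ p, g p (θ p) =
      ∏ p, ∫ t in Set.Icc (0:ℝ) (2*π), g p t := by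
  rw [← MeasureTheory.integral_indicator (cube_meas n m)]
  have h : ∀ θ : Fin n × Fin m → ℝ,
      (phaseCube n m).indicator (fun θ => ∏ p, g p (θ p)) θ
        = ∏ p, (Set.Icc (0:ℝ) (2*π)).indicator (g p) (θ p) := by
    intro θ
    by_cases hθ : θ ∈ phaseCube n m
    · rw [Set.indicator_of_mem hθ]
      exact Finset.prod_congr rfl fun p _ =>
        (Set.indicator_of_mem (hθ p (Set.mem_univ p)) _).symm
    · rw [Set.indicator_of_notMem hθ]
      have hne : ¬ ∀ p, θ p ∈ Set.Icc (0:ℝ) (2*π) := fun hall => hθ fun p _ => hall p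
      obtain ⟨p, hp⟩ := not_forall.mp hne
      exact (Finset.prod_eq_zero (Finset.mem_univ p)
        (Set.indicator_of_notMem hp _)).symm
  simp_rw [h]
  rw [MeasureTheory.integral_fintype_prod_volume_eq_prod
    (f := fun p t => (Set.Icc (0:ℝ) (2*π)).indicator (g p) t)]
  exact Finset.prod_congr rfl fun p _ =>
    (MeasureTheory.integral_indicator measurableSet_Icc)

lemma key_integral {n m : ℕ} (a a' : Fin n → Fin m) :
    ∫ θ in phaseCube n m,
      Complex.exp (Complex.I * ((∑ j, θ (j, a j) : ℝ) : ℂ)) *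
        (starRingEnd ℂ) (Complex.exp (Complex.I * ((∑ j, θ (j, a' j) : ℝ) : ℂ)))
      = if a = a' then ((2*π : ℝ):ℂ) ^ (n * m) else 0 := by
  classical
  set c : Fin n × Fin m → ℤ := fun p =>
    (if a p.1 = p.2 then 1 else 0) - (if a' p.1 = p.2 then 1 else 0) with hc
  have hsum : ∀ (b : Fin n → Fin m) (θ : Fin n × Fin m → ℝ),
      (∑ j, θ (j, b j)) = ∑ p : Fin n × Fin m, (if b p.1 = p.2 then θ p else 0) := by
    intro b θ
    rw [Fintype.sum_prod_type]
    exact Finset.sum_congr rfl fun j _ => by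
      rw [show (∑ y : Fin m, if b (j, y).1 = (j, y).2 then θ (j, y) else 0)
          = ∑ y : Fin m, if b j = y then θ (j, y) else 0 from rfl,
        Finset.sum_ite_eq Finset.univ (b j) (fun y => θ (j, y))]
      simp
  have hint : ∀ θ : Fin n × Fin m → ℝ,
      Complex.exp (Complex.I * ((∑ j, θ (j, a j) : ℝ) : ℂ)) *
        (starRingEnd ℂ) (Complex.exp (Complex.I * ((∑ j, θ (j, a' j) : ℝ) : ℂ)))
      = ∏ p : Fin n × Fin m, Complex.exp (Complex.I * (c p) * (θ p)) := by
    intro θ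
    rw [← Complex.exp_conj]
    rw [← Complex.exp_add, ← Complex.exp_sum]
    congr 1
    rw [map_mul, Complex.conj_I, Complex.conj_ofReal]
    rw [hsum a θ, hsum a' θ]
    push_cast
    rw [Finset.mul_sum, Finset.mul_sum, ← Finset.sum_add_distrib]
    refine Finset.sum_congr rfl fun p _ => ?_
    by_cases h1 : a p.1 = p.2 <;> by_cases h2 : a' p.1 = p.2 <;>
      simp [hc, h1, h2]
  simp_rw [hint]
  rw [integral_cube_prod (g := fun p t => Complex.exp (Complex.I * (c p) * t))]
  by_cases hd : a = a'
  · subst hd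
    have : ∀ p : Fin n × Fin m, c p = 0 := fun p => by simp [hc]
    simp_rw [integral_Icc_exp_int, this]
    simp [Finset.card_univ]
  · simp only [hd, if_false]
    obtain ⟨j, hj⟩ := Function.ne_iff.mp hd
    refine Finset.prod_eq_zero (Finset.mem_univ (j, a j)) ?_
    rw [integral_Icc_exp_int]
    have : c (j, a j) = 1 := by simp [hc, Ne.symm hj]
    simp [this]

lemma normSq_XiF {m n : ℕ} (hm : 0 < m) (hn : 0 < n) (a : Fin n → Fin m) :
    Complex.normSq (XiF m n a) =
      (if (a ⟨n - 1, by omega⟩ : ℕ) = 0 then 1 else 0) / (m : ℝ) ^ (n - 1) := by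
  rw [XiF, dif_pos hn]
  set r : ℝ := ∑ j : Fin n, if h : (j : ℕ) + 1 < n then
      (((a j : ℕ) : ℝ) * ((a ⟨(j : ℕ) + 1, h⟩ : ℕ) : ℝ)) else 0 with hr
  have hcast : (∑ j : Fin n, if h : (j : ℕ) + 1 < n then
      (((a j : ℕ) : ℂ) * ((a ⟨(j : ℕ) + 1, h⟩ : ℕ) : ℂ)) else 0) = ((r : ℝ) : ℂ) := by
    rw [hr]
    push_cast
    refine Finset.sum_congr rfl fun j _ => ?_
    split <;> simp
  rw [hcast]
  have hexp : 2 * (π : ℂ) * Complex.I * ((r : ℂ)) / (m : ℂ)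
      = ((2 * π * r / m : ℝ) : ℂ) * Complex.I := by push_cast; ring
  rw [hexp, Complex.normSq_mul]
  have habs : Complex.normSq (Complex.exp (((2 * π * r / m : ℝ) : ℂ) * Complex.I)) = 1 := by
    rw [← Complex.sq_norm, Complex.norm_exp_ofReal_mul_I]; norm_num
  rw [habs, mul_one, Complex.normSq_div]
  have hs : ((Real.sqrt m : ℂ)) ^ (n - 1) = (((Real.sqrt m) ^ (n-1) : ℝ) : ℂ) := by
    push_cast; ring
  rw [hs, Complex.normSq_ofReal]
  have : ((Real.sqrt m) ^ (n-1)) * ((Real.sqrt m) ^ (n-1)) = (m:ℝ) ^ (n-1) := by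
    rw [← pow_add, ← two_mul, pow_mul, sq_sqrt (by positivity)]
  rw [this]
  congr 1
  split <;> simp

/-- Eq. (68) of the paper: the phase-averaged position distribution of the quantum walk
with random phase shifts driven by the Fourier coin is
`(1/m^{n-1}) #{paths a from 0 to x with a_n = 0}`. -/
theorem mean_probability_fourier (d : ℕ) (hd : 1 ≤ d) (n : ℕ) (hn : 1 ≤ n)
    (x : Fin d → ℤ) :
    (1 / (2 * π) ^ (n * (2 * d))) *
        ∫ θ in phaseCube n (2 * d),
          ∑ b : Fin (2 * d),
            ‖∑ a ∈ Finset.univ.filter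
                (fun a : Fin n → Fin (2 * d) =>
                  (∑ j : Fin n, eZ d (a j)) = x ∧ a ⟨0, by omega⟩ = b),
              Complex.exp (Complex.I * ((∑ j : Fin n, θ (j, a j) : ℝ) : ℂ)) *
                XiF (2 * d) n a‖ ^ 2
      = (1 / ((2 * d : ℕ) : ℝ) ^ (n - 1)) *
          (Finset.univ.filter
            (fun a : Fin n → Fin (2 * d) =>
              (∑ j : Fin n, eZ d (a j)) = x ∧ (a ⟨n - 1, by omega⟩ : ℕ) = 0)).card := by
  classical
  have hm2 : 0 < 2 * d := by omega
  set m := 2 * d with hmdef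
  set E : (Fin n → Fin m) → (Fin n × Fin m → ℝ) → ℂ :=
    fun a θ => Complex.exp (Complex.I * ((∑ j : Fin n, θ (j, a j) : ℝ) : ℂ)) with hE
  set T : Fin m → Finset (Fin n → Fin m) := fun b => Finset.univ.filter
      (fun a => (∑ j : Fin n, eZ d (a j)) = x ∧ a ⟨0, by omega⟩ = b) with hT
  -- continuity / integrability
  have hEcont : ∀ a : Fin n → Fin m, Continuous (fun θ : Fin n × Fin m → ℝ => E a θ) := by
    intro a
    apply Complex.continuous_exp.comp
    exact continuous_const.mul (Complex.continuous_ofReal.comp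
      (continuous_finset_sum _ fun j _ => continuous_apply _))
  have hcont : ∀ a a' : Fin n → Fin m,
      Continuous (fun θ : Fin n × Fin m → ℝ => E a θ * (starRingEnd ℂ) (E a' θ)) :=
    fun a a' => (hEcont a).mul (continuous_star.comp (hEcont a'))
  have hIntC : ∀ a a' : Fin n → Fin m,
      IntegrableOn (fun θ => E a θ * (starRingEnd ℂ) (E a' θ)) (phaseCube n m) volume :=
    fun a a' => (hcont a a').continuousOn.integrableOn_compact (cube_compact n m)
  have hIntC' : ∀ a a' : Fin n → Fin m,
      IntegrableOn (fun θ =>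
        ((XiF m n a * (starRingEnd ℂ) (XiF m n a')) *
          (E a θ * (starRingEnd ℂ) (E a' θ))).re) (phaseCube n m) volume := by
    intro a a'
    exact (Complex.continuous_re.comp
      (continuous_const.mul (hcont a a'))).continuousOn.integrableOn_compact (cube_compact n m)
  -- step 1: pointwise expansion of the norm squared
  have step1 : ∀ θ : Fin n × Fin m → ℝ,
      (∑ b : Fin m, ‖∑ a ∈ T b, E a θ * XiF m n a‖ ^ 2)
      = ∑ b : Fin m, ∑ a ∈ T b, ∑ a' ∈ T b,
          ((XiF m n a * (starRingEnd ℂ) (XiF m n a')) *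
            (E a θ * (starRingEnd ℂ) (E a' θ))).re := by
    intro θ
    refine Finset.sum_congr rfl fun b _ => ?_
    have h1 : ∀ w : ℂ, ‖w‖ ^ 2 = (w * (starRingEnd ℂ) w).re := by
      intro w
      rw [Complex.mul_conj, Complex.ofReal_re, ← Complex.sq_norm]
    rw [h1, map_sum, Finset.sum_mul_sum, Complex.re_sum]
    refine Finset.sum_congr rfl fun a _ => ?_
    rw [Complex.re_sum]
    refine Finset.sum_congr rfl fun a' _ => ?_
    congr 1
    rw [map_mul]
    ring
  rw [MeasureTheory.setIntegral_congr_fun (cube_meas n m) fun θ _ => step1 θ]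
  -- step 2: interchange integral and sums
  rw [MeasureTheory.integral_finset_sum _ (fun b _ =>
    integrable_finset_sum _ (fun a _ => integrable_finset_sum _ (fun a' _ => hIntC' a a')))]
  have step2 : ∀ b : Fin m,
      (∫ θ in phaseCube n m, ∑ a ∈ T b, ∑ a' ∈ T b,
          ((XiF m n a * (starRingEnd ℂ) (XiF m n a')) *
            (E a θ * (starRingEnd ℂ) (E a' θ))).re)
      = ∑ a ∈ T b, ∑ a' ∈ T b,
          ((XiF m n a * (starRingEnd ℂ) (XiF m n a')) *
            (if a = a' then ((2*π : ℝ):ℂ) ^ (n * m) else 0)).re := by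
    intro b
    rw [MeasureTheory.integral_finset_sum _ (fun a _ =>
      integrable_finset_sum _ (fun a' _ => hIntC' a a'))]
    refine Finset.sum_congr rfl fun a _ => ?_
    rw [MeasureTheory.integral_finset_sum _ (fun a' _ => hIntC' a a')]
    refine Finset.sum_congr rfl fun a' _ => ?_
    have h2 : IntegrableOn (fun θ =>
        (XiF m n a * (starRingEnd ℂ) (XiF m n a')) *
          (E a θ * (starRingEnd ℂ) (E a' θ))) (phaseCube n m) volume :=
      (hIntC a a').const_mul _
    have h4 := integral_re (𝕜 := ℂ) h2
    simp only [RCLike.re_to_complex] at h4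
    rw [h4, MeasureTheory.integral_const_mul]
    simp only [hE]
    rw [key_integral a a']
  simp_rw [step2]
  -- step 3: collapse the diagonal
  have step3 : ∀ b : Fin m,
      (∑ a ∈ T b, ∑ a' ∈ T b,
          ((XiF m n a * (starRingEnd ℂ) (XiF m n a')) *
            (if a = a' then ((2*π : ℝ):ℂ) ^ (n * m) else 0)).re)
      = ∑ a ∈ T b, (2*π) ^ (n * m) * Complex.normSq (XiF m n a) := by
    intro b
    refine Finset.sum_congr rfl fun a ha => ?_
    have h3 : ∀ a' : Fin n → Fin m,
        ((XiF m n a * (starRingEnd ℂ) (XiF m n a')) *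
            (if a = a' then ((2*π : ℝ):ℂ) ^ (n * m) else 0)).re
        = if a' = a then (2*π) ^ (n * m) * Complex.normSq (XiF m n a) else 0 := by
      intro a'
      by_cases h : a = a'
      · subst h
        rw [if_pos rfl, if_pos rfl, Complex.mul_conj, ← Complex.ofReal_pow,
          ← Complex.ofReal_mul, Complex.ofReal_re]
        ring
      · simp [h, Ne.symm h]
    simp_rw [h3]
    rw [Finset.sum_ite_eq' (T b) a
      (fun _ => (2*π) ^ (n * m) * Complex.normSq (XiF m n a)), if_pos ha]
  simp_rw [step3]
  -- step 4: sum the fibers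
  have hfib : ∀ (f : (Fin n → Fin m) → ℝ),
      (∑ b : Fin m, ∑ a ∈ T b, f a)
        = ∑ a ∈ Finset.univ.filter
            (fun a : Fin n → Fin m => (∑ j : Fin n, eZ d (a j)) = x), f a := by
    intro f
    have hTb : ∀ b, T b = (Finset.univ.filter
        (fun a : Fin n → Fin m => (∑ j : Fin n, eZ d (a j)) = x)).filter
        (fun a => a ⟨0, by omega⟩ = b) := by
      intro b
      rw [hT, Finset.filter_filter]
    simp_rw [hTb]
    exact Finset.sum_fiberwise _ (fun a => a ⟨0, by omega⟩) f
  rw [hfib]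
  have hnorm : ∀ a ∈ Finset.univ.filter
      (fun a : Fin n → Fin m => (∑ j : Fin n, eZ d (a j)) = x),
      (2*π) ^ (n * m) * Complex.normSq (XiF m n a)
        = (2*π) ^ (n * m) / (m : ℝ) ^ (n - 1) *
            (if (a ⟨n - 1, by omega⟩ : ℕ) = 0 then 1 else 0) := by
    intro a _
    rw [normSq_XiF hm2 (by omega) a]
    ring
  rw [Finset.sum_congr rfl hnorm, ← Finset.mul_sum]
  rw [Finset.sum_boole, Finset.filter_filter]
  have h2pi : ((2*π:ℝ)) ^ (n*m) ≠ 0 := by positivity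
  have hmr : ((m:ℕ):ℝ) ^ (n-1) ≠ 0 := by positivity
  field_simp
  rw [show ((m:ℕ):ℝ) = ((2*d : ℕ):ℝ) from rfl]
  push_cast
  ring
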